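/- With notation as in the random model, for each fixed i with 0 ≤ i ≤ 0.9·log_b n, the random variable |T*_i| satisfies |T*_i| = E(|T*_i|) + O(√(pn)·log log n) with probability at least 1 − 2·exp(−(log log n)²/3). -/

import Mathlib

open MeasureTheory Finset
open scoped Classical

/-- The Bernoulli(p) measure on `Bool`. -/
noncomputable def bern (p : ℝ) : Measure Bool :=
  ENNReal.ofReal p • Measure.dirac true + ENNReal.ofReal (1 - p) • Measure.dirac false

/-- The law of the random subset `[n]_p`, as the product of `n` Bernoulli(p) measures. -/
noncomputable def randMeasure (n : ℕ) (p : ℝ) : Measure (Fin n → Bool) :=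
  Measure.pi fun _ => bern p

/-- The realization of the random subset `[n]_p ⊆ {1,...,n}` from a sample `ω`. -/
noncomputable def randSet (n : ℕ) (ω : Fin n → Bool) : Finset ℕ :=
  (Finset.univ.filter fun i : Fin n => ω i = true).image fun i => (i : ℕ) + 1

/-- `k` is an `i`-th subpower of `b` if `k = b^i · l` with `b ∤ l`. -/
def isSubpower (b i k : ℕ) : Prop := ∃ l : ℕ, k = b ^ i * l ∧ ¬ b ∣ l

/-- `v` lies in `S` at even distance from the smallest vertex of its component in the
subgraph of `D` induced on `S`, where `D` has arcs `(x,y)` with `b*x = a*y`: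
there is a directed path `c 0 → ⋯ → c k = v` of even length inside `S` such that
`c 0` has no in-neighbour inside `S`. -/
def evenDist (a b : ℕ) (S : Finset ℕ) (v : ℕ) : Prop :=
  ∃ (k : ℕ) (c : Fin (k + 1) → ℕ), Even k ∧ c (Fin.last k) = v ∧
    (∀ i, c i ∈ S) ∧
    (∀ i : Fin k, b * c i.castSucc = a * c i.succ) ∧
    ∀ u : ℕ, b * u = a * c 0 → u ∉ S

/-- `|T*_i|`: the number of `i`-th subpowers of `b` in `S = [n]_p` lying at even
distance from the smallest vertex of their component in `D[S]`. -/
noncomputable def TstarCard (a b n i : ℕ) (S : Finset ℕ) : ℕ :=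
  ((Finset.Icc 1 n).filter fun v => isSubpower b i v ∧ evenDist a b S v).card

lemma bern_prob {p : ℝ} (h0 : 0 ≤ p) (h1 : p ≤ 1) : IsProbabilityMeasure (bern p) := by
  constructor
  simp only [bern, Measure.add_apply, Measure.smul_apply, smul_eq_mul,
    Measure.dirac_apply_of_mem (Set.mem_univ _), mul_one]
  rw [← ENNReal.ofReal_add h0 (by linarith)]
  norm_num

lemma randMeasure_prob {n : ℕ} {p : ℝ} (h0 : 0 ≤ p) (h1 : p ≤ 1) :
    IsProbabilityMeasure (randMeasure n p) := by
  haveI := bern_prob h0 h1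
  unfold randMeasure
  infer_instance

/-- `g` depends only on coordinates in `J`. -/
def DeterminedBy {n : ℕ} (g : (Fin n → Bool) → ℝ) (J : Finset (Fin n)) : Prop :=
  ∀ ω ω' : Fin n → Bool, (∀ j ∈ J, ω j = ω' j) → g ω = g ω'

lemma DeterminedBy.mono {n : ℕ} {g : (Fin n → Bool) → ℝ} {J K : Finset (Fin n)}
    (hJK : J ⊆ K) (h : DeterminedBy g J) : DeterminedBy g K :=
  fun ω ω' hag => h ω ω' fun j hj => hag j (hJK hj)

lemma integral_mul_det {n : ℕ} {p : ℝ} (h0 : 0 ≤ p) (h1 : p ≤ 1) (J : Finset (Fin n))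
    {g h : (Fin n → Bool) → ℝ} (hg : DeterminedBy g J) (hh : DeterminedBy h Jᶜ) :
    ∫ ω, g ω * h ω ∂randMeasure n p
      = (∫ ω, g ω ∂randMeasure n p) * ∫ ω, h ω ∂randMeasure n p := by
  haveI := bern_prob h0 h1
  set P : Fin n → Prop := fun j => j ∈ J with hP
  haveI instF1 : Fintype {j : Fin n // P j} := Subtype.fintype P
  haveI instF2 : Fintype {j : Fin n // ¬ P j} := Subtype.fintype _
  have hmp := measurePreserving_piEquivPiSubtypeProd (fun _ : Fin n => bern p) P
  let e := MeasurableEquiv.piEquivPiSubtypeProd (fun _ : Fin n => Bool) P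
  haveI : IsProbabilityMeasure (Measure.pi fun _ : Subtype P => bern p) := by infer_instance
  haveI : IsProbabilityMeasure (Measure.pi fun _ : {j : Fin n // ¬ P j} => bern p) := by
    infer_instance
  have hsymm : ∀ (z : (Subtype P → Bool) × ({j : Fin n // ¬ P j} → Bool)) (j : Fin n),
      e.symm z j = if h : P j then z.1 ⟨j, h⟩ else z.2 ⟨j, h⟩ := fun z j => rfl
  set G : ({j : Fin n // P j} → Bool) → ℝ := fun x => g (e.symm (x, fun _ => false)) with hG
  set H : ({j : Fin n // ¬ P j} → Bool) → ℝ := fun y => h (e.symm (fun _ => false, y)) with hH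
  have hgG : ∀ ω, g ω = G ((e ω).1) := by
    intro ω
    apply hg
    intro j hj
    rw [hsymm, dif_pos hj]
    rfl
  have hhH : ∀ ω, h ω = H ((e ω).2) := by
    intro ω
    apply hh
    intro j hj
    have hj' : ¬ P j := by simpa [hP] using hj
    rw [hsymm, dif_neg hj']
    rfl
  have key1 := hmp.integral_comp e.measurableEmbedding (fun z => G z.1 * H z.2)
  rw [integral_prod_mul] at key1
  have key2 := hmp.integral_comp e.measurableEmbedding (fun z => G z.1)
  rw [integral_fun_fst, probReal_univ, one_smul] at key2
  have key3 := hmp.integral_comp e.measurableEmbedding (fun z => H z.2)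
  rw [integral_fun_snd, probReal_univ, one_smul] at key3
  have h1 : ∫ ω, g ω * h ω ∂(Measure.pi fun _ : Fin n => bern p)
      = ∫ ω, G ((e ω).1) * H ((e ω).2) ∂(Measure.pi fun _ : Fin n => bern p) := by
    congr 1; funext ω; rw [hgG ω, hhH ω]
  have h2 : ∫ ω, g ω ∂(Measure.pi fun _ : Fin n => bern p)
      = ∫ ω, G ((e ω).1) ∂(Measure.pi fun _ : Fin n => bern p) := by
    congr 1; funext ω; rw [hgG ω]
  have h3 : ∫ ω, h ω ∂(Measure.pi fun _ : Fin n => bern p)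
      = ∫ ω, H ((e ω).2) ∂(Measure.pi fun _ : Fin n => bern p) := by
    congr 1; funext ω; rw [hhH ω]
  show ∫ ω, g ω * h ω ∂(Measure.pi fun _ : Fin n => bern p)
      = (∫ ω, g ω ∂(Measure.pi fun _ : Fin n => bern p))
        * ∫ ω, h ω ∂(Measure.pi fun _ : Fin n => bern p)
  rw [h1, h2, h3]
  exact key1.trans (by rw [← key2, ← key3])

/-- Product of functions determined by pairwise disjoint coordinate blocks factorizes. -/
lemma integral_prod_det {n : ℕ} {p : ℝ} (h0 : 0 ≤ p) (h1 : p ≤ 1) {ι : Type*}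
    (s : Finset ι) (g : ι → (Fin n → Bool) → ℝ) (J : ι → Finset (Fin n))
    (hdet : ∀ v ∈ s, DeterminedBy (g v) (J v))
    (hdisj : ∀ v ∈ s, ∀ w ∈ s, v ≠ w → Disjoint (J v) (J w)) :
    ∫ ω, ∏ v ∈ s, g v ω ∂randMeasure n p = ∏ v ∈ s, ∫ ω, g v ω ∂randMeasure n p := by
  haveI := randMeasure_prob (n := n) h0 h1
  induction s using Finset.induction_on with
  | empty => simp
  | @insert a s ha ih =>
    have hprod : ∀ ω : Fin n → Bool, ∏ v ∈ insert a s, g v ω = g a ω * ∏ v ∈ s, g v ω :=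
      fun ω => Finset.prod_insert ha
    have hrest : DeterminedBy (fun ω => ∏ v ∈ s, g v ω) (J a)ᶜ := by
      intro ω ω' hag
      refine Finset.prod_congr rfl fun v hv => ?_
      refine hdet v (Finset.mem_insert_of_mem hv) ω ω' fun j hj => ?_
      refine hag j ?_
      have hd : Disjoint (J a) (J v) := by
        refine hdisj a (Finset.mem_insert_self a s) v (Finset.mem_insert_of_mem hv) ?_
        rintro rfl; exact ha hv
      exact Finset.mem_compl.mpr fun hjJa => (Finset.disjoint_left.mp hd hjJa) hj
    calc ∫ ω, ∏ v ∈ insert a s, g v ω ∂randMeasure n p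
        = ∫ ω, g a ω * ∏ v ∈ s, g v ω ∂randMeasure n p := by
          congr 1; funext ω; exact hprod ω
      _ = (∫ ω, g a ω ∂randMeasure n p) * ∫ ω, ∏ v ∈ s, g v ω ∂randMeasure n p :=
          integral_mul_det h0 h1 (J a) (hdet a (Finset.mem_insert_self a s)) hrest
      _ = (∫ ω, g a ω ∂randMeasure n p) * ∏ v ∈ s, ∫ ω, g v ω ∂randMeasure n p := by
          rw [ih (fun v hv => hdet v (Finset.mem_insert_of_mem hv))
            (fun v hv w hw hvw => hdisj v (Finset.mem_insert_of_mem hv) w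
              (Finset.mem_insert_of_mem hw) hvw)]
      _ = ∏ v ∈ insert a s, ∫ ω, g v ω ∂randMeasure n p := by rw [Finset.prod_insert ha]

/-- `w` lies on the `(b/a)`-chain through `v`. -/
def chainRel (a b v w : ℕ) : Prop := ∃ j k : ℕ, a ^ j * b ^ k * w = a ^ k * b ^ j * v

lemma chainRel_self (a b v : ℕ) : chainRel a b v v := ⟨0, 0, rfl⟩

lemma chainRel_step {a b v x y : ℕ} (h : chainRel a b v y) (hxy : b * x = a * y) :
    chainRel a b v x := by
  obtain ⟨j, k, hjk⟩ := h
  refine ⟨j, k + 1, ?_⟩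
  have : a ^ j * b ^ (k + 1) * x = a ^ j * b ^ k * (b * x) := by ring
  rw [this, hxy]
  calc a ^ j * b ^ k * (a * y) = a * (a ^ j * b ^ k * y) := by ring
    _ = a * (a ^ k * b ^ j * v) := by rw [hjk]
    _ = a ^ (k + 1) * b ^ j * v := by ring

/-- Two `i`-th subpowers of `b` on a common chain coincide. -/
lemma chainRel_unique {a b i v v' w : ℕ} (ha : 0 < a) (hb : 0 < b)
    (hco : Nat.Coprime a b) (hv : isSubpower b i v) (hv' : isSubpower b i v')
    (h1 : chainRel a b v w) (h2 : chainRel a b v' w) : v = v' := by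
  obtain ⟨l, rfl, hl⟩ := hv
  obtain ⟨l', rfl, hl'⟩ := hv'
  obtain ⟨j1, k1, e1⟩ := h1
  obtain ⟨j2, k2, e2⟩ := h2
  -- common multiple
  have E : a ^ (k1 + j2) * b ^ (j1 + k2) * (b ^ i * l) =
      a ^ (j1 + k2) * b ^ (k1 + j2) * (b ^ i * l') := by
    have e1' : a ^ j2 * b ^ k2 * (a ^ j1 * b ^ k1 * w) =
        a ^ j2 * b ^ k2 * (a ^ k1 * b ^ j1 * (b ^ i * l)) := by rw [e1]
    have e2' : a ^ j1 * b ^ k1 * (a ^ j2 * b ^ k2 * w) =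
        a ^ j1 * b ^ k1 * (a ^ k2 * b ^ j2 * (b ^ i * l')) := by rw [e2]
    have : a ^ j2 * b ^ k2 * (a ^ k1 * b ^ j1 * (b ^ i * l)) =
        a ^ j1 * b ^ k1 * (a ^ k2 * b ^ j2 * (b ^ i * l')) := by
      rw [← e1', ← e2']; ring
    calc a ^ (k1 + j2) * b ^ (j1 + k2) * (b ^ i * l)
        = a ^ j2 * b ^ k2 * (a ^ k1 * b ^ j1 * (b ^ i * l)) := by ring
      _ = a ^ j1 * b ^ k1 * (a ^ k2 * b ^ j2 * (b ^ i * l')) := this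
      _ = a ^ (j1 + k2) * b ^ (k1 + j2) * (b ^ i * l') := by ring
  set s := k1 + j2 with hs
  set t := j1 + k2 with ht
  -- E : a ^ s * b ^ t * (b ^ i * l) = a ^ t * b ^ s * (b ^ i * l')
  have key : ∀ s t l l' : ℕ, ¬ b ∣ l → ¬ b ∣ l' →
      a ^ s * b ^ t * (b ^ i * l) = a ^ t * b ^ s * (b ^ i * l') → s ≤ t → s = t := by
    intro s t l l' hl hl' E hst
    by_contra hne
    obtain ⟨d, rfl⟩ := Nat.exists_eq_add_of_le hst
    have hd : 0 < d := by omega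
    have E' : b ^ d * (a ^ s * l) = a ^ d * (a ^ s * l') := by
      have : b ^ (s + i) * (b ^ d * (a ^ s * l)) = b ^ (s + i) * (a ^ d * (a ^ s * l')) := by
        calc b ^ (s + i) * (b ^ d * (a ^ s * l)) = a ^ s * b ^ (s + d) * (b ^ i * l) := by ring
          _ = a ^ (s + d) * b ^ s * (b ^ i * l') := E
          _ = b ^ (s + i) * (a ^ d * (a ^ s * l')) := by ring
      exact Nat.eq_of_mul_eq_mul_left (pow_pos hb _) this
    have hbdvd : b ∣ a ^ (d + s) * l' := by
      refine ⟨b ^ (d - 1) * (a ^ s * l), ?_⟩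
      calc a ^ (d + s) * l' = a ^ d * (a ^ s * l') := by ring
        _ = b ^ d * (a ^ s * l) := E'.symm
        _ = b * (b ^ (d - 1) * (a ^ s * l)) := by
            have hbd : b ^ d = b * b ^ (d - 1) := by
              conv_lhs => rw [show d = 1 + (d - 1) by omega]
              rw [pow_add, pow_one]
            rw [hbd]; ring
    have : b ∣ l' := (Nat.Coprime.dvd_of_dvd_mul_left
      ((hco.symm.pow_right _)) hbdvd)
    exact hl' this
  have hst : s = t := by
    rcases le_total s t with h | h
    · exact key s t l l' hl hl' E h
    · exact (key t s l' l hl' hl E.symm h).symm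
  rw [hst] at E
  exact Nat.eq_of_mul_eq_mul_left (by positivity) E
lemma evenDist_congr {a b n v : ℕ} {S S' : Finset ℕ} (hS : S ⊆ Finset.Icc 1 n)
    (hS' : S' ⊆ Finset.Icc 1 n)
    (hag : ∀ w ∈ Finset.Icc 1 n, chainRel a b v w → (w ∈ S ↔ w ∈ S'))
    (h : evenDist a b S v) : evenDist a b S' v := by
  obtain ⟨k, c, hk, hlast, hmem, hstep, hmin⟩ := h
  have hchain : ∀ i : Fin (k + 1), chainRel a b v (c i) := by
    have aux : ∀ m : ℕ, m ≤ k → chainRel a b v (c ⟨k - m, by omega⟩) := by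
      intro m
      induction m with
      | zero =>
        intro _
        have : (⟨k - 0, by omega⟩ : Fin (k + 1)) = Fin.last k := by
          apply Fin.ext; simp
        rw [this, hlast]
        exact chainRel_self a b v
      | succ m ihm =>
        intro hm
        have hmk : m ≤ k := by omega
        have ih := ihm hmk
        set i : Fin k := ⟨k - (m + 1), by omega⟩ with hi
        have h1 : i.castSucc = (⟨k - (m + 1), by omega⟩ : Fin (k + 1)) := rfl
        have h2 : i.succ = (⟨k - m, by omega⟩ : Fin (k + 1)) := by
          apply Fin.ext; simp [hi]; omega
        have hedge := hstep i
        rw [h1, h2] at hedge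
        exact chainRel_step ih hedge
    intro i
    have hik : (i : ℕ) ≤ k := by omega
    have : i = (⟨k - (k - (i : ℕ)), by omega⟩ : Fin (k + 1)) := by
      apply Fin.ext; simp; omega
    rw [this]
    exact aux (k - (i : ℕ)) (by omega)
  refine ⟨k, c, hk, hlast, ?_, hstep, ?_⟩
  · intro i
    exact (hag (c i) (hS (hmem i)) (hchain i)).mp (hmem i)
  · intro u hu humem
    have huIcc : u ∈ Finset.Icc 1 n := hS' humem
    have hcu : chainRel a b v u := chainRel_step (hchain 0) hu
    exact hmin u hu ((hag u huIcc hcu).mpr humem)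

/-- The block of coordinates on the chain of `v`. -/
noncomputable def blk (a b n v : ℕ) : Finset (Fin n) :=
  Finset.univ.filter fun j => chainRel a b v ((j : ℕ) + 1)

lemma blk_disjoint {a b i n v v' : ℕ} (ha : 0 < a) (hb : 0 < b) (hco : Nat.Coprime a b)
    (hv : isSubpower b i v) (hv' : isSubpower b i v') (hne : v ≠ v') :
    Disjoint (blk a b n v) (blk a b n v') := by
  rw [Finset.disjoint_left]
  intro j hj hj'
  simp only [blk, Finset.mem_filter] at hj hj'
  exact hne (chainRel_unique ha hb hco hv hv' hj.2 hj'.2)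

lemma mem_randSet_iff {n w : ℕ} {ω : Fin n → Bool} (h1 : 1 ≤ w) (h2 : w ≤ n) :
    w ∈ randSet n ω ↔ ω ⟨w - 1, by omega⟩ = true := by
  have hmem : w ∈ randSet n ω ↔ ∃ j : Fin n, ω j = true ∧ (j : ℕ) + 1 = w := by
    simp [randSet]
  rw [hmem]
  constructor
  · rintro ⟨j, hj, hjw⟩
    have hje : (⟨w - 1, by omega⟩ : Fin n) = j := by
      apply Fin.ext
      show w - 1 = (j : ℕ)
      omega
    rw [hje]
    exact hj
  · intro hω
    refine ⟨⟨w - 1, by omega⟩, hω, ?_⟩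
    show (w - 1) + 1 = w
    omega

lemma randSet_subset {n : ℕ} (ω : Fin n → Bool) : randSet n ω ⊆ Finset.Icc 1 n := by
  intro w hw
  have hmem : w ∈ randSet n ω ↔ ∃ j : Fin n, ω j = true ∧ (j : ℕ) + 1 = w := by
    simp [randSet]
  obtain ⟨j, _, rfl⟩ := hmem.mp hw
  simp only [Finset.mem_Icc]
  have := j.isLt
  omega

lemma Y_determined (a b n v : ℕ) :
    DeterminedBy (fun ω => if evenDist a b (randSet n ω) v then (1 : ℝ) else 0)
      (blk a b n v) := by
  intro ω ω' hagree
  have hag : ∀ ω₁ ω₂ : Fin n → Bool, (∀ j ∈ blk a b n v, ω₁ j = ω₂ j) →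
      ∀ w ∈ Finset.Icc 1 n, chainRel a b v w → (w ∈ randSet n ω₁ ↔ w ∈ randSet n ω₂) := by
    intro ω₁ ω₂ hagr w hw hc
    simp only [Finset.mem_Icc] at hw
    have hj : (⟨w - 1, by omega⟩ : Fin n) ∈ blk a b n v := by
      simp only [blk, Finset.mem_filter, Finset.mem_univ, true_and]
      have : (w - 1) + 1 = w := by omega
      simpa [this] using hc
    rw [mem_randSet_iff hw.1 hw.2, mem_randSet_iff hw.1 hw.2, hagr _ hj]
  show (if evenDist a b (randSet n ω) v then (1 : ℝ) else 0)
      = (if evenDist a b (randSet n ω') v then (1 : ℝ) else 0)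
  by_cases h : evenDist a b (randSet n ω) v
  · rw [if_pos h, if_pos (evenDist_congr (randSet_subset ω) (randSet_subset ω')
      (hag ω ω' hagree) h)]
  · rw [if_neg h, if_neg fun h' => h (evenDist_congr (randSet_subset ω') (randSet_subset ω)
      (hag ω' ω fun j hj => (hagree j hj).symm) h')]

lemma TstarCard_eq_sum (a b n i : ℕ) (S : Finset ℕ) :
    (TstarCard a b n i S : ℝ) =
      ∑ v ∈ (Finset.Icc 1 n).filter (fun v => isSubpower b i v),
        if evenDist a b S v then (1 : ℝ) else 0 := by
  rw [TstarCard]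
  rw [show ((Finset.Icc 1 n).filter fun v => isSubpower b i v ∧ evenDist a b S v)
      = ((Finset.Icc 1 n).filter (fun v => isSubpower b i v)).filter
          (fun v => evenDist a b S v) by rw [Finset.filter_filter]]
  rw [Finset.card_filter]
  push_cast
  rfl
lemma DeterminedBy.comp {n : ℕ} {g : (Fin n → Bool) → ℝ} {J : Finset (Fin n)}
    (h : DeterminedBy g J) (F : ℝ → ℝ) : DeterminedBy (fun ω => F (g ω)) J :=
  fun ω ω' hag => by
    show F (g ω) = F (g ω')
    rw [h ω ω' hag]

/-- Hoeffding-type bound on the mgf of a centered variable bounded by 1. -/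
lemma factor_bound {n : ℕ} {p : ℝ} (h0 : 0 ≤ p) (h1 : p ≤ 1)
    {W : (Fin n → Bool) → ℝ} (hW : ∀ ω, |W ω| ≤ 1)
    (hmean : ∫ ω, W ω ∂randMeasure n p = 0) (s : ℝ) :
    ∫ ω, Real.exp (s * W ω) ∂randMeasure n p ≤ Real.exp (s ^ 2 / 2) := by
  haveI := randMeasure_prob (n := n) h0 h1
  set c1 : ℝ := (Real.exp s + Real.exp (-s)) / 2 with hc1
  set c2 : ℝ := (Real.exp s - Real.exp (-s)) / 2 with hc2
  have hpt : ∀ ω, Real.exp (s * W ω) ≤ c1 + W ω * c2 := by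
    intro ω
    have h := abs_le.mp (hW ω)
    have ha' : (0:ℝ) ≤ (1 + W ω) / 2 := by linarith
    have hb' : (0:ℝ) ≤ (1 - W ω) / 2 := by linarith
    have hab : (1 + W ω) / 2 + (1 - W ω) / 2 = 1 := by ring
    have hconv := convexOn_exp.2 (Set.mem_univ s) (Set.mem_univ (-s)) ha' hb' hab
    simp only [smul_eq_mul] at hconv
    have harg : (1 + W ω) / 2 * s + (1 - W ω) / 2 * (-s) = s * W ω := by ring
    rw [harg] at hconv
    calc Real.exp (s * W ω)
        ≤ (1 + W ω) / 2 * Real.exp s + (1 - W ω) / 2 * Real.exp (-s) := hconv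
      _ = c1 + W ω * c2 := by rw [hc1, hc2]; ring
  have hint : ∫ ω, Real.exp (s * W ω) ∂randMeasure n p
      ≤ ∫ ω, (c1 + W ω * c2) ∂randMeasure n p :=
    integral_mono (Integrable.of_finite) (Integrable.of_finite) hpt
  have hval : ∫ ω, (c1 + W ω * c2) ∂randMeasure n p = c1 := by
    rw [integral_add (integrable_const c1) (Integrable.of_finite), integral_const,
      integral_mul_const, hmean, probReal_univ]
    simp
  have hcosh : c1 ≤ Real.exp (s ^ 2 / 2) := by
    have := Real.cosh_le_exp_half_sq s
    rwa [Real.cosh_eq] at this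
  calc ∫ ω, Real.exp (s * W ω) ∂randMeasure n p ≤ c1 := hint.trans_eq hval
    _ ≤ Real.exp (s ^ 2 / 2) := hcosh

/-- For each `i` with `0 ≤ i ≤ 0.9·log_b n`,
`|T*_i| = E(|T*_i|) + O(√(pn)·log log n)` with probability at least
`1 − 2·exp(−(log log n)²/3)`. -/
theorem stmt14 (a b : ℕ) (ha : 0 < a) (hab : a < b) (hco : Nat.Coprime a b)
    (p : ℝ) (hp0 : 0 < p) (hp1 : p < 1) :
    ∃ C : ℝ, 0 < C ∧ ∀ n : ℕ, 3 ≤ n → ∀ i : ℕ, (i : ℝ) ≤ 0.9 * Real.logb b n →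
      1 - ENNReal.ofReal (2 * Real.exp (-(Real.log (Real.log n)) ^ 2 / 3))
        ≤ randMeasure n p {ω |
            |(TstarCard a b n i (randSet n ω) : ℝ)
              - ∫ w, (TstarCard a b n i (randSet n w) : ℝ) ∂ randMeasure n p|
            ≤ C * Real.sqrt (p * n) * Real.log (Real.log n)} := by
  have hb0 : 0 < b := lt_trans ha hab
  have hCpos : 0 < (Real.sqrt (2/(3*p))) := Real.sqrt_pos.mpr (by positivity)
  refine ⟨(Real.sqrt (2/(3*p))), hCpos, ?_⟩
  intro n hn3 i _
  haveI hprob := randMeasure_prob (n := n) hp0.le hp1.le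
  have hn3' : (3 : ℝ) ≤ (n : ℝ) := by exact_mod_cast hn3
  have hn0 : (0:ℝ) < (n:ℝ) := by linarith
  have hlogn : 1 < Real.log (n:ℝ) := by
    rw [Real.lt_log_iff_exp_lt (by linarith)]
    calc Real.exp 1 < 2.7182818286 := Real.exp_one_lt_d9
      _ ≤ (n:ℝ) := by linarith
  have hL0 : 0 < (Real.log (Real.log (n:ℝ))) := Real.log_pos hlogn
  have hXsum : ∀ ω, ((TstarCard a b n i (randSet n ω) : ℝ)) = ∑ v ∈ ((Finset.Icc 1 n).filter (fun v => isSubpower b i v)), (if evenDist a b (randSet n ω) v then (1:ℝ) else 0) :=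
    fun ω => TstarCard_eq_sum a b n i _
  have hmsum : (∫ w, ((TstarCard a b n i (randSet n w) : ℝ)) ∂randMeasure n p) = ∑ v ∈ ((Finset.Icc 1 n).filter (fun v => isSubpower b i v)), (∫ ω', (if evenDist a b (randSet n ω') v then (1:ℝ) else 0) ∂randMeasure n p) := by
    calc (∫ w, ((TstarCard a b n i (randSet n w) : ℝ)) ∂randMeasure n p) = ∫ w, (∑ v ∈ ((Finset.Icc 1 n).filter (fun v => isSubpower b i v)), (if evenDist a b (randSet n w) v then (1:ℝ) else 0)) ∂randMeasure n p := by
          congr 1; funext w; exact hXsum w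
      _ = ∑ v ∈ ((Finset.Icc 1 n).filter (fun v => isSubpower b i v)), (∫ ω', (if evenDist a b (randSet n ω') v then (1:ℝ) else 0) ∂randMeasure n p) := by
          rw [integral_finset_sum _ (fun v _ => Integrable.of_finite)]
  have hq01 : ∀ v : ℕ, 0 ≤ (∫ ω', (if evenDist a b (randSet n ω') v then (1:ℝ) else 0) ∂randMeasure n p) ∧ (∫ ω', (if evenDist a b (randSet n ω') v then (1:ℝ) else 0) ∂randMeasure n p) ≤ 1 := by
    intro v
    constructor
    · refine integral_nonneg fun ω' => ?_
      by_cases h : evenDist a b (randSet n ω') v <;> simp [h]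
    · calc (∫ ω', (if evenDist a b (randSet n ω') v then (1:ℝ) else 0) ∂randMeasure n p) ≤ ∫ _ω', (1:ℝ) ∂randMeasure n p := by
            refine integral_mono Integrable.of_finite (integrable_const 1) fun ω' => ?_
            by_cases h : evenDist a b (randSet n ω') v <;> simp [h]
        _ = 1 := by simp
  have htpos : 0 < ((Real.sqrt (2/(3*p))) * Real.sqrt (p * (n:ℝ)) * (Real.log (Real.log (n:ℝ)))) := by
    have h1 : 0 < Real.sqrt (p * (n:ℝ)) := Real.sqrt_pos.mpr (by positivity)
    positivity
  have hFcard : ((((Finset.Icc 1 n).filter (fun v => isSubpower b i v))).card : ℝ) ≤ (n : ℝ) := by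
    have h1 : (((Finset.Icc 1 n).filter (fun v => isSubpower b i v))).card ≤ (Finset.Icc 1 n).card := Finset.card_filter_le _ _
    have h2 : (Finset.Icc 1 n).card = n := by rw [Nat.card_Icc]; omega
    exact_mod_cast h1.trans_eq h2
  have hs00 : 0 ≤ (((Real.sqrt (2/(3*p))) * Real.sqrt (p * (n:ℝ)) * (Real.log (Real.log (n:ℝ)))) / (n:ℝ)) := le_of_lt (div_pos htpos hn0)
  -- the two Chernoff tails
  have tail : ∀ ε : ℝ, ε = 1 ∨ ε = -1 →
      (randMeasure n p {ω | ((Real.sqrt (2/(3*p))) * Real.sqrt (p * (n:ℝ)) * (Real.log (Real.log (n:ℝ)))) ≤ ε * (((TstarCard a b n i (randSet n ω) : ℝ)) - (∫ w, ((TstarCard a b n i (randSet n w) : ℝ)) ∂randMeasure n p))}).toReal ≤ Real.exp (-(Real.log (Real.log (n:ℝ))) ^ 2 / 3) := by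
    intro ε hε
    have habs : ∀ v ∈ ((Finset.Icc 1 n).filter (fun v => isSubpower b i v)), ∀ ω, |(ε * ((if evenDist a b (randSet n ω) v then (1:ℝ) else 0) - (∫ ω', (if evenDist a b (randSet n ω') v then (1:ℝ) else 0) ∂randMeasure n p)))| ≤ 1 := by
      intro v _ ω
      have hq := hq01 v
      have hy : 0 ≤ (if evenDist a b (randSet n ω) v then (1:ℝ) else 0) ∧ (if evenDist a b (randSet n ω) v then (1:ℝ) else 0) ≤ 1 := by
        by_cases h : evenDist a b (randSet n ω) v <;> simp [h]
      have h1 : |(ε * ((if evenDist a b (randSet n ω) v then (1:ℝ) else 0) - (∫ ω', (if evenDist a b (randSet n ω') v then (1:ℝ) else 0) ∂randMeasure n p)))| = |(if evenDist a b (randSet n ω) v then (1:ℝ) else 0) - (∫ ω', (if evenDist a b (randSet n ω') v then (1:ℝ) else 0) ∂randMeasure n p)| := by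
        rw [abs_mul]
        rcases hε with rfl | rfl <;> simp
      rw [h1, abs_le]
      constructor
      · linarith [hy.2, hq.1]
      · linarith [hy.1, hq.2]
    have hmean : ∀ v ∈ ((Finset.Icc 1 n).filter (fun v => isSubpower b i v)), ∫ ω, (ε * ((if evenDist a b (randSet n ω) v then (1:ℝ) else 0) - (∫ ω', (if evenDist a b (randSet n ω') v then (1:ℝ) else 0) ∂randMeasure n p))) ∂randMeasure n p = 0 := by
      intro v _
      rw [integral_const_mul, integral_sub Integrable.of_finite (integrable_const _),
        integral_const]
      simp
    have hdet : ∀ v ∈ ((Finset.Icc 1 n).filter (fun v => isSubpower b i v)),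
        DeterminedBy (fun ω => Real.exp ((((Real.sqrt (2/(3*p))) * Real.sqrt (p * (n:ℝ)) * (Real.log (Real.log (n:ℝ)))) / (n:ℝ)) * (ε * ((if evenDist a b (randSet n ω) v then (1:ℝ) else 0) - (∫ ω', (if evenDist a b (randSet n ω') v then (1:ℝ) else 0) ∂randMeasure n p))))) (blk a b n v) := by
      intro v _
      exact (Y_determined a b n v).comp
        (fun y => Real.exp ((((Real.sqrt (2/(3*p))) * Real.sqrt (p * (n:ℝ)) * (Real.log (Real.log (n:ℝ)))) / (n:ℝ)) * (ε * (y - (∫ ω', (if evenDist a b (randSet n ω') v then (1:ℝ) else 0) ∂randMeasure n p)))))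
    have hdisj : ∀ v ∈ ((Finset.Icc 1 n).filter (fun v => isSubpower b i v)), ∀ w ∈ ((Finset.Icc 1 n).filter (fun v => isSubpower b i v)), v ≠ w → Disjoint (blk a b n v) (blk a b n w) := by
      intro v hv w hw hvw
      exact blk_disjoint ha hb0 hco (Finset.mem_filter.mp hv).2 (Finset.mem_filter.mp hw).2 hvw
    have hmgf : ∫ ω, Real.exp ((((Real.sqrt (2/(3*p))) * Real.sqrt (p * (n:ℝ)) * (Real.log (Real.log (n:ℝ)))) / (n:ℝ)) * (ε * (((TstarCard a b n i (randSet n ω) : ℝ)) - (∫ w, ((TstarCard a b n i (randSet n w) : ℝ)) ∂randMeasure n p)))) ∂randMeasure n p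
        ≤ Real.exp ((n:ℝ) * (((Real.sqrt (2/(3*p))) * Real.sqrt (p * (n:ℝ)) * (Real.log (Real.log (n:ℝ)))) / (n:ℝ)) ^ 2 / 2) := by
      have e1 : ∫ ω, Real.exp ((((Real.sqrt (2/(3*p))) * Real.sqrt (p * (n:ℝ)) * (Real.log (Real.log (n:ℝ)))) / (n:ℝ)) * (ε * (((TstarCard a b n i (randSet n ω) : ℝ)) - (∫ w, ((TstarCard a b n i (randSet n w) : ℝ)) ∂randMeasure n p)))) ∂randMeasure n p
          = ∫ ω, ∏ v ∈ ((Finset.Icc 1 n).filter (fun v => isSubpower b i v)), Real.exp ((((Real.sqrt (2/(3*p))) * Real.sqrt (p * (n:ℝ)) * (Real.log (Real.log (n:ℝ)))) / (n:ℝ)) * (ε * ((if evenDist a b (randSet n ω) v then (1:ℝ) else 0) - (∫ ω', (if evenDist a b (randSet n ω') v then (1:ℝ) else 0) ∂randMeasure n p)))) ∂randMeasure n p := by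
        congr 1; funext ω
        rw [← Real.exp_sum, ← Finset.mul_sum]
        congr 2
        rw [hXsum ω, hmsum, ← Finset.sum_sub_distrib, Finset.mul_sum]
      rw [e1, integral_prod_det hp0.le hp1.le ((Finset.Icc 1 n).filter (fun v => isSubpower b i v)) _ (fun v => blk a b n v) hdet hdisj]
      calc ∏ v ∈ ((Finset.Icc 1 n).filter (fun v => isSubpower b i v)), ∫ ω, Real.exp ((((Real.sqrt (2/(3*p))) * Real.sqrt (p * (n:ℝ)) * (Real.log (Real.log (n:ℝ)))) / (n:ℝ)) * (ε * ((if evenDist a b (randSet n ω) v then (1:ℝ) else 0) - (∫ ω', (if evenDist a b (randSet n ω') v then (1:ℝ) else 0) ∂randMeasure n p)))) ∂randMeasure n p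
          ≤ ∏ _v ∈ ((Finset.Icc 1 n).filter (fun v => isSubpower b i v)), Real.exp ((((Real.sqrt (2/(3*p))) * Real.sqrt (p * (n:ℝ)) * (Real.log (Real.log (n:ℝ)))) / (n:ℝ)) ^ 2 / 2) := by
            refine Finset.prod_le_prod (fun v _ => integral_nonneg fun ω => (Real.exp_pos _).le)
              (fun v hv => factor_bound hp0.le hp1.le (habs v hv) (hmean v hv) (((Real.sqrt (2/(3*p))) * Real.sqrt (p * (n:ℝ)) * (Real.log (Real.log (n:ℝ)))) / (n:ℝ)))
        _ = Real.exp ((((Real.sqrt (2/(3*p))) * Real.sqrt (p * (n:ℝ)) * (Real.log (Real.log (n:ℝ)))) / (n:ℝ)) ^ 2 / 2) ^ (((Finset.Icc 1 n).filter (fun v => isSubpower b i v))).card := Finset.prod_const _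
        _ ≤ Real.exp ((n:ℝ) * (((Real.sqrt (2/(3*p))) * Real.sqrt (p * (n:ℝ)) * (Real.log (Real.log (n:ℝ)))) / (n:ℝ)) ^ 2 / 2) := by
            rw [← Real.exp_nat_mul]
            apply Real.exp_le_exp.mpr
            have h1 : (0:ℝ) ≤ (((Real.sqrt (2/(3*p))) * Real.sqrt (p * (n:ℝ)) * (Real.log (Real.log (n:ℝ)))) / (n:ℝ)) ^ 2 / 2 := by positivity
            calc ((((Finset.Icc 1 n).filter (fun v => isSubpower b i v))).card : ℝ) * ((((Real.sqrt (2/(3*p))) * Real.sqrt (p * (n:ℝ)) * (Real.log (Real.log (n:ℝ)))) / (n:ℝ)) ^ 2 / 2) ≤ (n:ℝ) * ((((Real.sqrt (2/(3*p))) * Real.sqrt (p * (n:ℝ)) * (Real.log (Real.log (n:ℝ)))) / (n:ℝ)) ^ 2 / 2) :=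
                  mul_le_mul_of_nonneg_right hFcard h1
              _ = (n:ℝ) * (((Real.sqrt (2/(3*p))) * Real.sqrt (p * (n:ℝ)) * (Real.log (Real.log (n:ℝ)))) / (n:ℝ)) ^ 2 / 2 := by ring
    have hcher := ProbabilityTheory.measure_ge_le_exp_mul_mgf (μ := randMeasure n p)
      (X := fun ω => ε * (((TstarCard a b n i (randSet n ω) : ℝ)) - (∫ w, ((TstarCard a b n i (randSet n w) : ℝ)) ∂randMeasure n p))) ((Real.sqrt (2/(3*p))) * Real.sqrt (p * (n:ℝ)) * (Real.log (Real.log (n:ℝ)))) hs00 Integrable.of_finite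
    have harith : -(((Real.sqrt (2/(3*p))) * Real.sqrt (p * (n:ℝ)) * (Real.log (Real.log (n:ℝ)))) / (n:ℝ)) * ((Real.sqrt (2/(3*p))) * Real.sqrt (p * (n:ℝ)) * (Real.log (Real.log (n:ℝ)))) + (n:ℝ) * (((Real.sqrt (2/(3*p))) * Real.sqrt (p * (n:ℝ)) * (Real.log (Real.log (n:ℝ)))) / (n:ℝ)) ^ 2 / 2 = -(Real.log (Real.log (n:ℝ))) ^ 2 / 3 := by
      have hC2 : (Real.sqrt (2/(3*p))) ^ 2 = 2/(3*p) := Real.sq_sqrt (by positivity)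
      have hpn : Real.sqrt (p * (n:ℝ)) ^ 2 = p * (n:ℝ) := Real.sq_sqrt (by positivity)
      have harg : -(((Real.sqrt (2/(3*p))) * Real.sqrt (p * (n:ℝ)) * (Real.log (Real.log (n:ℝ)))) / (n:ℝ)) * ((Real.sqrt (2/(3*p))) * Real.sqrt (p * (n:ℝ)) * (Real.log (Real.log (n:ℝ)))) + (n:ℝ) * (((Real.sqrt (2/(3*p))) * Real.sqrt (p * (n:ℝ)) * (Real.log (Real.log (n:ℝ)))) / (n:ℝ)) ^ 2 / 2 = -(((Real.sqrt (2/(3*p))) * Real.sqrt (p * (n:ℝ)) * (Real.log (Real.log (n:ℝ)))) ^ 2) / (2 * (n:ℝ)) := by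
        field_simp
        ring
      have ht2 : ((Real.sqrt (2/(3*p))) * Real.sqrt (p * (n:ℝ)) * (Real.log (Real.log (n:ℝ)))) ^ 2 = (2/(3*p)) * (p * (n:ℝ)) * (Real.log (Real.log (n:ℝ))) ^ 2 := by
        rw [mul_pow, mul_pow, hC2, hpn]
      rw [harg, ht2]
      field_simp
    calc (randMeasure n p {ω | ((Real.sqrt (2/(3*p))) * Real.sqrt (p * (n:ℝ)) * (Real.log (Real.log (n:ℝ)))) ≤ ε * (((TstarCard a b n i (randSet n ω) : ℝ)) - (∫ w, ((TstarCard a b n i (randSet n w) : ℝ)) ∂randMeasure n p))}).toReal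
        ≤ Real.exp (-(((Real.sqrt (2/(3*p))) * Real.sqrt (p * (n:ℝ)) * (Real.log (Real.log (n:ℝ)))) / (n:ℝ)) * ((Real.sqrt (2/(3*p))) * Real.sqrt (p * (n:ℝ)) * (Real.log (Real.log (n:ℝ))))) *
            ProbabilityTheory.mgf (fun ω => ε * (((TstarCard a b n i (randSet n ω) : ℝ)) - (∫ w, ((TstarCard a b n i (randSet n w) : ℝ)) ∂randMeasure n p))) (randMeasure n p) (((Real.sqrt (2/(3*p))) * Real.sqrt (p * (n:ℝ)) * (Real.log (Real.log (n:ℝ)))) / (n:ℝ)) := hcher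
      _ ≤ Real.exp (-(((Real.sqrt (2/(3*p))) * Real.sqrt (p * (n:ℝ)) * (Real.log (Real.log (n:ℝ)))) / (n:ℝ)) * ((Real.sqrt (2/(3*p))) * Real.sqrt (p * (n:ℝ)) * (Real.log (Real.log (n:ℝ))))) * Real.exp ((n:ℝ) * (((Real.sqrt (2/(3*p))) * Real.sqrt (p * (n:ℝ)) * (Real.log (Real.log (n:ℝ)))) / (n:ℝ)) ^ 2 / 2) :=
          mul_le_mul_of_nonneg_left hmgf (Real.exp_pos _).le
      _ = Real.exp (-(((Real.sqrt (2/(3*p))) * Real.sqrt (p * (n:ℝ)) * (Real.log (Real.log (n:ℝ)))) / (n:ℝ)) * ((Real.sqrt (2/(3*p))) * Real.sqrt (p * (n:ℝ)) * (Real.log (Real.log (n:ℝ)))) + (n:ℝ) * (((Real.sqrt (2/(3*p))) * Real.sqrt (p * (n:ℝ)) * (Real.log (Real.log (n:ℝ)))) / (n:ℝ)) ^ 2 / 2) := (Real.exp_add _ _).symm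
      _ = Real.exp (-(Real.log (Real.log (n:ℝ))) ^ 2 / 3) := by rw [harith]
  -- assemble
  have hEc : {ω : Fin n → Bool | ¬ |((TstarCard a b n i (randSet n ω) : ℝ)) - (∫ w, ((TstarCard a b n i (randSet n w) : ℝ)) ∂randMeasure n p)| ≤ ((Real.sqrt (2/(3*p))) * Real.sqrt (p * (n:ℝ)) * (Real.log (Real.log (n:ℝ))))}
      ⊆ {ω | ((Real.sqrt (2/(3*p))) * Real.sqrt (p * (n:ℝ)) * (Real.log (Real.log (n:ℝ)))) ≤ 1 * (((TstarCard a b n i (randSet n ω) : ℝ)) - (∫ w, ((TstarCard a b n i (randSet n w) : ℝ)) ∂randMeasure n p))} ∪ {ω | ((Real.sqrt (2/(3*p))) * Real.sqrt (p * (n:ℝ)) * (Real.log (Real.log (n:ℝ)))) ≤ (-1) * (((TstarCard a b n i (randSet n ω) : ℝ)) - (∫ w, ((TstarCard a b n i (randSet n w) : ℝ)) ∂randMeasure n p))} := by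
    intro ω hω
    simp only [Set.mem_setOf_eq, not_le] at hω
    rcases lt_abs.mp hω with h | h
    · left
      show ((Real.sqrt (2/(3*p))) * Real.sqrt (p * (n:ℝ)) * (Real.log (Real.log (n:ℝ)))) ≤ 1 * (((TstarCard a b n i (randSet n ω) : ℝ)) - (∫ w, ((TstarCard a b n i (randSet n w) : ℝ)) ∂randMeasure n p))
      linarith
    · right
      show ((Real.sqrt (2/(3*p))) * Real.sqrt (p * (n:ℝ)) * (Real.log (Real.log (n:ℝ)))) ≤ (-1) * (((TstarCard a b n i (randSet n ω) : ℝ)) - (∫ w, ((TstarCard a b n i (randSet n w) : ℝ)) ∂randMeasure n p))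
      linarith
  have hA : randMeasure n p {ω | ((Real.sqrt (2/(3*p))) * Real.sqrt (p * (n:ℝ)) * (Real.log (Real.log (n:ℝ)))) ≤ 1 * (((TstarCard a b n i (randSet n ω) : ℝ)) - (∫ w, ((TstarCard a b n i (randSet n w) : ℝ)) ∂randMeasure n p))}
      ≤ ENNReal.ofReal (Real.exp (-(Real.log (Real.log (n:ℝ))) ^ 2 / 3)) := by
    rw [← ENNReal.ofReal_toReal (measure_ne_top (randMeasure n p) _)]
    exact ENNReal.ofReal_le_ofReal (tail 1 (Or.inl rfl))
  have hB : randMeasure n p {ω | ((Real.sqrt (2/(3*p))) * Real.sqrt (p * (n:ℝ)) * (Real.log (Real.log (n:ℝ)))) ≤ (-1) * (((TstarCard a b n i (randSet n ω) : ℝ)) - (∫ w, ((TstarCard a b n i (randSet n w) : ℝ)) ∂randMeasure n p))}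
      ≤ ENNReal.ofReal (Real.exp (-(Real.log (Real.log (n:ℝ))) ^ 2 / 3)) := by
    rw [← ENNReal.ofReal_toReal (measure_ne_top (randMeasure n p) _)]
    exact ENNReal.ofReal_le_ofReal (tail (-1) (Or.inr rfl))
  have hcompl : randMeasure n p {ω : Fin n → Bool | ¬ |((TstarCard a b n i (randSet n ω) : ℝ)) - (∫ w, ((TstarCard a b n i (randSet n w) : ℝ)) ∂randMeasure n p)| ≤ ((Real.sqrt (2/(3*p))) * Real.sqrt (p * (n:ℝ)) * (Real.log (Real.log (n:ℝ))))}
      ≤ ENNReal.ofReal (2 * Real.exp (-(Real.log (Real.log (n:ℝ))) ^ 2 / 3)) := by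
    refine le_trans (measure_mono hEc) (le_trans (measure_union_le _ _) ?_)
    rw [two_mul, ENNReal.ofReal_add (Real.exp_pos _).le (Real.exp_pos _).le]
    exact add_le_add hA hB
  have hmeas : MeasurableSet {ω : Fin n → Bool | |((TstarCard a b n i (randSet n ω) : ℝ)) - (∫ w, ((TstarCard a b n i (randSet n w) : ℝ)) ∂randMeasure n p)| ≤ ((Real.sqrt (2/(3*p))) * Real.sqrt (p * (n:ℝ)) * (Real.log (Real.log (n:ℝ))))} :=
    MeasurableSet.of_discrete
  have h1 : randMeasure n p {ω : Fin n → Bool | |((TstarCard a b n i (randSet n ω) : ℝ)) - (∫ w, ((TstarCard a b n i (randSet n w) : ℝ)) ∂randMeasure n p)| ≤ ((Real.sqrt (2/(3*p))) * Real.sqrt (p * (n:ℝ)) * (Real.log (Real.log (n:ℝ))))}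
      + randMeasure n p ({ω : Fin n → Bool | |((TstarCard a b n i (randSet n ω) : ℝ)) - (∫ w, ((TstarCard a b n i (randSet n w) : ℝ)) ∂randMeasure n p)| ≤ ((Real.sqrt (2/(3*p))) * Real.sqrt (p * (n:ℝ)) * (Real.log (Real.log (n:ℝ))))}ᶜ) = 1 := by
    rw [measure_add_measure_compl hmeas, measure_univ]
  show 1 - ENNReal.ofReal (2 * Real.exp (-(Real.log (Real.log (n:ℝ))) ^ 2 / 3))
      ≤ randMeasure n p {ω : Fin n → Bool | |((TstarCard a b n i (randSet n ω) : ℝ)) - (∫ w, ((TstarCard a b n i (randSet n w) : ℝ)) ∂randMeasure n p)| ≤ ((Real.sqrt (2/(3*p))) * Real.sqrt (p * (n:ℝ)) * (Real.log (Real.log (n:ℝ))))}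
  rw [tsub_le_iff_right]
  calc (1:ENNReal) = randMeasure n p {ω : Fin n → Bool | |((TstarCard a b n i (randSet n ω) : ℝ)) - (∫ w, ((TstarCard a b n i (randSet n w) : ℝ)) ∂randMeasure n p)| ≤ ((Real.sqrt (2/(3*p))) * Real.sqrt (p * (n:ℝ)) * (Real.log (Real.log (n:ℝ))))}
        + randMeasure n p ({ω : Fin n → Bool | |((TstarCard a b n i (randSet n ω) : ℝ)) - (∫ w, ((TstarCard a b n i (randSet n w) : ℝ)) ∂randMeasure n p)| ≤ ((Real.sqrt (2/(3*p))) * Real.sqrt (p * (n:ℝ)) * (Real.log (Real.log (n:ℝ))))}ᶜ) := h1.symm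
    _ ≤ randMeasure n p {ω : Fin n → Bool | |((TstarCard a b n i (randSet n ω) : ℝ)) - (∫ w, ((TstarCard a b n i (randSet n w) : ℝ)) ∂randMeasure n p)| ≤ ((Real.sqrt (2/(3*p))) * Real.sqrt (p * (n:ℝ)) * (Real.log (Real.log (n:ℝ))))}
        + ENNReal.ofReal (2 * Real.exp (-(Real.log (Real.log (n:ℝ))) ^ 2 / 3)) := by
        refine add_le_add_right ?_ _
        rw [Set.compl_setOf]
        exact hcompl
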